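/- Let n be a positive integer and define F_n(x,q) = ∑_{k=0}^n (-1)^k qbinom(n,k) qbinom(n+k,k) (x;q)_k q^{k(k+1)/2 - nk} / (-q;q)_k. Then F_n(x,q) = (-1)^n F_n(-x,q), as an identity of polynomials in x over the field of rational functions in q. -/

import Mathlib

open Polynomial Finset

/-- The variable `q` as an element of the field of rational functions over `ℚ`. -/
noncomputable def q : RatFunc ℚ := RatFunc.X

/-- The q-shifted factorial `(a; Q)_n = (1-a)(1-aQ)⋯(1-aQ^{n-1})`. -/
noncomputable def qPoch (a Q : RatFunc ℚ) (n : ℕ) : RatFunc ℚ :=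
  ∏ i ∈ Finset.range n, (1 - a * Q ^ i)

/-- The q-integer `[p] = 1 + q + ⋯ + q^{p-1}`. -/
noncomputable def qInt (p : ℕ) : RatFunc ℚ := ∑ i ∈ Finset.range p, q ^ i

/-- The Gaussian binomial coefficient in base `Q`. -/
noncomputable def qBinom (n k : ℕ) (Q : RatFunc ℚ) : RatFunc ℚ :=
  qPoch (Q ^ (n - k + 1)) Q k / qPoch Q Q k

/-- `ModQ r p A B` : the difference `A - B` lies in the ideal generated by `[p]^r`
in the localization of `ℚ[q]` at the irreducible polynomial `[p]`;
concretely `(A - B) * b = [p]^r * a` for polynomials `a b` with `[p] ∤ b`. -/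
def ModQ (r p : ℕ) (A B : RatFunc ℚ) : Prop :=
  ∃ a b : Polynomial ℚ, ¬ ((∑ i ∈ Finset.range p, Polynomial.X ^ i) ∣ b) ∧
    (A - B) * algebraMap (Polynomial ℚ) (RatFunc ℚ) b =
      qInt p ^ r * algebraMap (Polynomial ℚ) (RatFunc ℚ) a

abbrev K := RatFunc ℚ

lemma hq0 : (q : K) ≠ 0 := RatFunc.X_ne_zero

lemma qpow_ne_one {t : ℕ} (ht : 1 ≤ t) : (q : K) ^ t ≠ 1 := by
  intro h
  have : ((Polynomial.X : Polynomial ℚ) ^ t) = 1 := by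
    apply RatFunc.algebraMap_injective ℚ
    rw [map_pow, map_one, RatFunc.algebraMap_X]
    exact h
  have := congrArg (Polynomial.eval 0) this
  simp [zero_pow (by omega : t ≠ 0)] at this

lemma one_sub_qpow_ne {t : ℕ} (ht : 1 ≤ t) : (1 : K) - q ^ t ≠ 0 := by
  rw [sub_ne_zero]; exact fun h => qpow_ne_one ht h.symm

lemma one_add_qpow_ne (t : ℕ) : (1 : K) + q ^ t ≠ 0 := by
  intro h
  have h' : (q : K) ^ t = -1 := by linear_combination h
  have : ((Polynomial.X : Polynomial ℚ) ^ t) = -1 := by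
    apply RatFunc.algebraMap_injective ℚ
    rw [map_pow, map_neg, map_one, RatFunc.algebraMap_X]
    exact h'
  have h2 := congrArg (Polynomial.eval 0) this
  rcases Nat.eq_zero_or_pos t with rfl | ht
  · simp at h2; norm_num at h2
  · simp [zero_pow (by omega : t ≠ 0)] at h2

noncomputable def Ee (s k : ℕ) : K := ∏ i ∈ Finset.range k, (1 - q ^ (s + i))
noncomputable def Ebar (k : ℕ) : K := ∏ i ∈ Finset.range k, (1 + q ^ (i + 1))

lemma Ee_succ (s k : ℕ) : Ee s (k + 1) = Ee s k * (1 - q ^ (s + k)) :=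
  Finset.prod_range_succ _ _

lemma Ee_succ' (s k : ℕ) : Ee s (k + 1) = (1 - q ^ s) * Ee (s + 1) k := by
  rw [Ee, Finset.prod_range_succ', add_zero, mul_comm]
  congr 1
  apply Finset.prod_congr rfl
  intro i _
  rw [show s + (i + 1) = s + 1 + i from by omega]

lemma Ebar_succ (k : ℕ) : Ebar (k + 1) = Ebar k * (1 + q ^ (k + 1)) :=
  Finset.prod_range_succ _ _

lemma Ee_ne {s : ℕ} (k : ℕ) (hs : 1 ≤ s) : Ee s k ≠ 0 := by
  apply Finset.prod_ne_zero_iff.mpr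
  intro i _
  exact one_sub_qpow_ne (by omega)

lemma Ebar_ne (k : ℕ) : Ebar k ≠ 0 := by
  apply Finset.prod_ne_zero_iff.mpr
  intro i _
  exact one_add_qpow_ne _

lemma qPoch_pow (s k : ℕ) : qPoch (q ^ s) q k = Ee s k := by
  apply Finset.prod_congr rfl
  intro i _
  rw [← pow_add]

lemma qPoch_q (k : ℕ) : qPoch q q k = Ee 1 k := by
  rw [← qPoch_pow, pow_one]

lemma qPoch_neg (k : ℕ) : qPoch (-q) q k = Ebar k := by
  apply Finset.prod_congr rfl
  intro i _
  rw [neg_mul, sub_neg_eq_add, ← pow_succ']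

noncomputable def coefA (m k : ℕ) : K :=
  (-1 : RatFunc ℚ) ^ k * qBinom m k q * qBinom (m + k) k q *
    q ^ ((k * (k + 1) / 2 : ℕ) - (m : ℤ) * k) / qPoch (-q) q k

lemma qzpow (a b : ℕ) : (q : K) ^ (((a : ℕ) : ℤ) - ((b : ℕ) : ℤ)) = q ^ a / q ^ b := by
  rw [zpow_sub₀ hq0, zpow_natCast, zpow_natCast]

lemma coefA_eq (e k : ℕ) :
    coefA (k + e) k * (q ^ ((k + e) * k) * (Ee 1 k * Ee 1 k * Ebar k)) =
      (-1 : K) ^ k * Ee (e + 1) k * Ee (k + e + 1) k * q ^ (k * (k + 1) / 2) := by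
  have h1 : (k + e) - k + 1 = e + 1 := by omega
  have h2 : (k + e + k) - k + 1 = k + e + 1 := by omega
  have hz : (q : K) ^ (((k * (k + 1) / 2 : ℕ) : ℤ) - ((k + e : ℕ) : ℤ) * (k : ℤ)) =
      q ^ (k * (k + 1) / 2) / q ^ ((k + e) * k) := by
    rw [show ((k + e : ℕ) : ℤ) * (k : ℤ) = (((k + e) * k : ℕ) : ℤ) by push_cast; ring]
    exact qzpow _ _
  rw [coefA, qBinom, qBinom, h1, h2, qPoch_pow, qPoch_pow, qPoch_q, qPoch_neg, hz]
  have e1 : Ee 1 k ≠ 0 := Ee_ne k le_rfl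
  have e2 : Ebar k ≠ 0 := Ebar_ne k
  have e3 : (q : K) ^ ((k + e) * k) ≠ 0 := pow_ne_zero _ hq0
  field_simp

lemma denom_ne (e k : ℕ) : (q : K) ^ ((k + e) * k) * (Ee 1 k * Ee 1 k * Ebar k) ≠ 0 :=
  mul_ne_zero (pow_ne_zero _ hq0)
    (mul_ne_zero (mul_ne_zero (Ee_ne k le_rfl) (Ee_ne k le_rfl)) (Ebar_ne k))

lemma coefA_div (e k : ℕ) :
    coefA (k + e) k = ((-1 : K) ^ k * Ee (e + 1) k * Ee (k + e + 1) k * q ^ (k * (k + 1) / 2)) /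
      (q ^ ((k + e) * k) * (Ee 1 k * Ee 1 k * Ebar k)) := by
  rw [eq_div_iff (denom_ne e k)]
  exact coefA_eq e k

-- ladder in the base: (1-q^(s)) * Ee (s+1) k = Ee s k * (1 - q^(s+k))
lemma ladder (s k : ℕ) : (1 - q ^ s) * Ee (s + 1) k = Ee s k * (1 - q ^ (s + k)) := by
  rw [← Ee_succ', Ee_succ]

lemma Ee_shift (s k : ℕ) (hs : 1 ≤ s) :
    Ee (s + 1) k = Ee s k * (1 - q ^ (s + k)) / (1 - q ^ s) := by
  rw [eq_div_iff (one_sub_qpow_ne hs), mul_comm (Ee (s+1) k)]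
  exact ladder s k

lemma ratio1 (e k : ℕ) :
    coefA (k + (e + 1)) k * (q ^ k * (1 - q ^ (e + 1))) =
      coefA (k + e) k * (1 - q ^ (2 * k + e + 1)) := by
  have h1 := coefA_eq (e + 1) k
  have h2 := coefA_eq e k
  have l1 := ladder (e + 1) k
  have l2 := ladder (k + e + 1) k
  rw [show k + (e + 1) = k + e + 1 from by omega] at h1 ⊢
  apply mul_right_cancel₀ (b := q ^ ((k + e) * k) * (Ee 1 k * Ee 1 k * Ebar k) *
    (1 - q ^ (k + e + 1)))
    (mul_ne_zero (denom_ne e k) (one_sub_qpow_ne (by omega)))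
  linear_combination ((1 - q ^ (e + 1)) * (1 - q ^ (k + e + 1))) * h1
    - ((1 - q ^ (k + e + 1)) * (1 - q ^ (2 * k + e + 1))) * h2
    + ((-1 : K) ^ k * q ^ (k * (k + 1) / 2)) *
        (((1 - q ^ (k + e + 1)) * Ee (k + e + 1 + 1) k) * l1
          + (Ee (e + 1) k * (1 - q ^ (e + 1 + k))) * l2)

lemma tri (j : ℕ) : (j + 1) * (j + 1 + 1) / 2 = j * (j + 1) / 2 + (j + 1) := by
  rw [show (j + 1) * (j + 1 + 1) = j * (j + 1) + (j + 1) * 2 from by ring]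
  omega

lemma ratio2 (e j : ℕ) :
    coefA (j + 1 + e) (j + 1) *
        (q ^ (j + 1 + e) * ((1 - q ^ (j + 1)) * (1 - q ^ (j + 1)) * (1 + q ^ (j + 1)))) =
      -(coefA (j + 1 + e) j * (q ^ (j + 1) * (1 - q ^ (e + 1)) * (1 - q ^ (2 * j + e + 2)))) := by
  have h1 := coefA_eq e (j + 1)
  have h2 := coefA_eq (e + 1) j
  rw [show j + (e + 1) = j + 1 + e from by omega] at h2
  rw [Ee_succ' (e + 1) j, Ee_succ (j + 1 + e + 1) j, Ee_succ 1 j, Ebar_succ j,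
    tri j] at h1
  have hP : Ee 1 j * Ee 1 j * Ebar j ≠ 0 :=
    mul_ne_zero (mul_ne_zero (Ee_ne j le_rfl) (Ee_ne j le_rfl)) (Ebar_ne j)
  have hD1 : (q : K) ^ ((j + 1 + e) * (j + 1)) * (Ee 1 j * Ee 1 j * Ebar j) *
      ((1 - q ^ (1 + j)) * (1 - q ^ (1 + j)) * (1 + q ^ (j + 1))) ≠ 0 :=
    mul_ne_zero (mul_ne_zero (pow_ne_zero _ hq0) hP)
      (mul_ne_zero (mul_ne_zero (one_sub_qpow_ne (by omega)) (one_sub_qpow_ne (by omega)))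
        (one_add_qpow_ne _))
  have hD2 : (q : K) ^ ((j + 1 + e) * j) * (Ee 1 j * Ee 1 j * Ebar j) ≠ 0 :=
    mul_ne_zero (pow_ne_zero _ hq0) hP
  apply mul_right_cancel₀ (b := (q ^ ((j + 1 + e) * (j + 1)) * (Ee 1 j * Ee 1 j * Ebar j) *
      ((1 - q ^ (1 + j)) * (1 - q ^ (1 + j)) * (1 + q ^ (j + 1)))) *
      (q ^ ((j + 1 + e) * j) * (Ee 1 j * Ee 1 j * Ebar j)))
    (mul_ne_zero hD1 hD2)
  linear_combination
    ((q ^ (j + 1 + e) * ((1 - q ^ (j + 1)) * (1 - q ^ (j + 1)) * (1 + q ^ (j + 1)))) *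
      (q ^ ((j + 1 + e) * j) * (Ee 1 j * Ee 1 j * Ebar j))) * h1
    + ((q ^ (j + 1) * (1 - q ^ (e + 1)) * (1 - q ^ (2 * j + e + 2))) *
      (q ^ ((j + 1 + e) * (j + 1)) * (Ee 1 j * Ee 1 j * Ebar j) *
        ((1 - q ^ (1 + j)) * (1 - q ^ (1 + j)) * (1 + q ^ (j + 1))))) * h2

lemma top1 (m : ℕ) :
    (1 - q ^ (m + 1)) * coefA (m + 1) (m + 1) * q ^ m =
      -((1 - q ^ (2 * m + 1)) * coefA m m) := by
  have h1 := coefA_eq 0 (m + 1)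
  have h2 := coefA_eq 0 m
  simp only [Nat.add_zero, Nat.zero_add] at h1 h2
  rw [Ee_succ 1 m, Ebar_succ m, Ee_succ (m + 1 + 1) m, tri m] at h1
  have l := ladder (m + 1) m
  have hP : Ee 1 m * Ee 1 m * Ebar m ≠ 0 :=
    mul_ne_zero (mul_ne_zero (Ee_ne m le_rfl) (Ee_ne m le_rfl)) (Ebar_ne m)
  have hD1 : (q : K) ^ ((m + 1) * (m + 1)) *
      ((Ee 1 m * (1 - q ^ (1 + m))) * (Ee 1 m * (1 - q ^ (1 + m))) *
        (Ebar m * (1 + q ^ (m + 1)))) ≠ 0 := by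
    refine mul_ne_zero (pow_ne_zero _ hq0) (mul_ne_zero (mul_ne_zero ?_ ?_) ?_) <;>
      first
        | exact mul_ne_zero (Ee_ne m le_rfl) (one_sub_qpow_ne (by omega))
        | exact mul_ne_zero (Ebar_ne m) (one_add_qpow_ne _)
  have hD2 : (q : K) ^ (m * m) * (Ee 1 m * Ee 1 m * Ebar m) ≠ 0 :=
    mul_ne_zero (pow_ne_zero _ hq0) hP
  apply mul_right_cancel₀ (b := (q ^ ((m + 1) * (m + 1)) *
      ((Ee 1 m * (1 - q ^ (1 + m))) * (Ee 1 m * (1 - q ^ (1 + m))) *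
        (Ebar m * (1 + q ^ (m + 1))))) *
      (q ^ (m * m) * (Ee 1 m * Ee 1 m * Ebar m)) * (1 - q ^ (m + 1)))
    (mul_ne_zero (mul_ne_zero hD1 hD2) (one_sub_qpow_ne (by omega)))
  linear_combination
    (q ^ m * (1 - q ^ (m + 1)) * (1 - q ^ (m + 1)) *
      (q ^ (m * m) * (Ee 1 m * Ee 1 m * Ebar m))) * h1
    + ((1 - q ^ (2 * m + 1)) * (1 - q ^ (m + 1)) *
      (q ^ ((m + 1) * (m + 1)) *
        ((Ee 1 m * (1 - q ^ (1 + m))) * (Ee 1 m * (1 - q ^ (1 + m))) *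
          (Ebar m * (1 + q ^ (m + 1)))))) * h2
    - ((-1 : K) ^ m * Ee 1 m * q ^ (m * (m + 1) / 2) * (1 - q ^ (m + 1)) *
        q ^ ((m + 1) * (m + 1)) * Ee 1 m * Ee 1 m * Ebar m * (1 - q ^ (1 + m)) *
        (1 - q ^ (2 * m + 2))) * l

lemma coefA_zero (m : ℕ) : coefA m 0 = 1 := by
  simp [coefA, qBinom, qPoch]

lemma key (m k : ℕ) (hm : 1 ≤ m) (hk : k ≤ m + 1) :
    (1 - q ^ (m + 1)) * coefA (m + 1) k =
      (1 - q ^ (2 * m + 1)) *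
        ((if k ≤ m then coefA m k * (q ^ k)⁻¹ else 0) -
          (if k = 0 then 0 else coefA m (k - 1) * (q ^ (k - 1))⁻¹)) -
      q ^ (m + 1) * (1 - q ^ m) * (if k + 1 ≤ m then coefA (m - 1) k else 0) := by
  rcases k with _ | j
  · -- k = 0
    rw [if_pos (by omega : (0:ℕ) ≤ m), if_pos rfl, if_pos (by omega : 0 + 1 ≤ m)]
    simp only [coefA_zero, pow_zero, inv_one, mul_one, sub_zero]
    ring
  rcases Nat.lt_or_ge (j + 1) (m + 1) with hlt | hge
  · -- 1 ≤ k ≤ m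
    obtain ⟨e0, he⟩ : ∃ e0, m = j + 1 + e0 := ⟨m - (j + 1), by omega⟩
    subst he
    rw [if_pos (by omega), if_neg (by omega)]
    simp only [Nat.add_sub_cancel]
    have hq1 : (q : K) ^ (j + 1) * (q ^ (j + 1))⁻¹ = 1 :=
      mul_inv_cancel₀ (pow_ne_zero _ hq0)
    have hq2 : (q : K) ^ j * (q ^ j)⁻¹ = 1 := mul_inv_cancel₀ (pow_ne_zero _ hq0)
    rcases e0 with _ | e
    · -- k = m
      rw [if_neg (by omega)]
      simp only [Nat.add_zero]
      have r1 := ratio1 0 (j + 1)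
      have r2 := ratio2 0 j
      rw [show (0 : ℕ) + 1 = 1 from rfl] at r1 r2
      rw [show j + 1 + 1 = j + 2 from rfl, show j + 1 + 0 = j + 1 from rfl,
        show 2 * (j + 1) + 0 + 1 = 2 * j + 3 from by omega] at r1
      rw [show j + 1 + 0 = j + 1 from rfl, show 2 * j + 0 + 2 = 2 * j + 2 from by omega] at r2
      rw [show j + 1 + 1 = j + 2 from rfl, show 2 * (j + 1) + 1 = 2 * j + 3 from by omega]
      apply mul_right_cancel₀ (b := q ^ (2 * j + 1) * ((1 - q ^ 1) * (1 - q ^ (2 * j + 2))))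
        (mul_ne_zero (pow_ne_zero _ hq0)
          (mul_ne_zero (one_sub_qpow_ne (by omega)) (one_sub_qpow_ne (by omega))))
      linear_combination
        ((1 - q ^ (j + 2)) * q ^ j * (1 - q ^ (2 * j + 2))) * r1
        + (1 - q ^ (2 * j + 3)) * r2
        - ((1 - q ^ (2 * j + 3)) * coefA (j + 1) (j + 1) * q ^ j * (1 - q ^ 1) *
            (1 - q ^ (2 * j + 2))) * hq1
        + ((1 - q ^ (2 * j + 3)) * coefA (j + 1) j * q ^ (j + 1) * (1 - q ^ 1) *
            (1 - q ^ (2 * j + 2))) * hq2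
    · -- 1 ≤ k ≤ m - 1
      rw [if_pos (by omega)]
      have r1 := ratio1 (e + 1) (j + 1)
      have r0 := ratio1 e (j + 1)
      have r2 := ratio2 (e + 1) j
      rw [show j + 1 + (e + 1 + 1) = j + e + 3 from by omega,
        show j + 1 + (e + 1) = j + e + 2 from by omega,
        show e + 1 + 1 = e + 2 from rfl,
        show 2 * (j + 1) + (e + 1) + 1 = 2 * j + e + 4 from by omega] at r1
      rw [show j + 1 + (e + 1) = j + e + 2 from by omega,
        show j + 1 + e = j + e + 1 from by omega,
        show 2 * (j + 1) + e + 1 = 2 * j + e + 3 from by omega] at r0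
      rw [show j + 1 + (e + 1) = j + e + 2 from by omega,
        show e + 1 + 1 = e + 2 from rfl,
        show 2 * j + (e + 1) + 2 = 2 * j + e + 3 from by omega] at r2
      rw [show j + 1 + (e + 1) + 1 = j + e + 3 from by omega,
        show j + 1 + (e + 1) - 1 = j + e + 1 from by omega,
        show j + 1 + (e + 1) = j + e + 2 from by omega,
        show 2 * (j + e + 2) + 1 = 2 * j + 2 * e + 5 from by omega]
      apply mul_right_cancel₀
        (b := q ^ (2 * j + 1) * ((1 - q ^ (e + 2)) * (1 - q ^ (2 * j + e + 3))))
        (mul_ne_zero (pow_ne_zero _ hq0)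
          (mul_ne_zero (one_sub_qpow_ne (by omega)) (one_sub_qpow_ne (by omega))))
      linear_combination
        ((1 - q ^ (j + e + 3)) * q ^ j * (1 - q ^ (2 * j + e + 3))) * r1
        - (q ^ (j + e + 3) * (1 - q ^ (j + e + 2)) * q ^ (2 * j + 1) * (1 - q ^ (e + 2))) * r0
        + (1 - q ^ (2 * j + 2 * e + 5)) * r2
        - ((1 - q ^ (2 * j + 2 * e + 5)) * coefA (j + e + 2) (j + 1) * q ^ j *
            (1 - q ^ (e + 2)) * (1 - q ^ (2 * j + e + 3))) * hq1
        + ((1 - q ^ (2 * j + 2 * e + 5)) * coefA (j + e + 2) j * q ^ (j + 1) *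
            (1 - q ^ (e + 2)) * (1 - q ^ (2 * j + e + 3))) * hq2
  · -- k = m + 1
    obtain rfl : j = m := by omega
    rw [if_neg (by omega), if_neg (by omega), if_neg (by omega)]
    simp only [Nat.add_sub_cancel]
    have hqm : (q : K) ^ j * (q ^ j)⁻¹ = 1 := mul_inv_cancel₀ (pow_ne_zero _ hq0)
    apply mul_right_cancel₀ (b := q ^ j) (pow_ne_zero _ hq0)
    linear_combination top1 j + ((1 - q ^ (2 * j + 1)) * coefA j j) * hqm

noncomputable def Pk (k : ℕ) : Polynomial (RatFunc ℚ) :=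
  ∏ i ∈ Finset.range k, (1 - Polynomial.C (q ^ i) * Polynomial.X)

noncomputable def Gpoly (m : ℕ) : Polynomial (RatFunc ℚ) :=
  ∑ k ∈ Finset.range (m + 1), Polynomial.C (coefA m k) * Pk k

noncomputable def w1 (m k : ℕ) : K := if k ≤ m then coefA m k * (q ^ k)⁻¹ else 0
noncomputable def w2 (m k : ℕ) : K :=
  if k = 0 then 0 else coefA m (k - 1) * (q ^ (k - 1))⁻¹
noncomputable def w3 (m k : ℕ) : K := if k + 1 ≤ m then coefA (m - 1) k else 0

lemma Pk_succ (k : ℕ) : Pk (k + 1) = Pk k * (1 - C (q ^ k) * X) :=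
  Finset.prod_range_succ _ _

lemma X_mul_Pk (k : ℕ) :
    (X : Polynomial K) * Pk k = C ((q ^ k)⁻¹) * (Pk k - Pk (k + 1)) := by
  have h : (C (q ^ k) : Polynomial K) * (X * Pk k) = Pk k - Pk (k + 1) := by
    rw [Pk_succ]; ring
  calc (X : Polynomial K) * Pk k
      = C ((q ^ k)⁻¹ * q ^ k) * (X * Pk k) := by
        rw [inv_mul_cancel₀ (pow_ne_zero _ hq0), map_one, one_mul]
    _ = C ((q ^ k)⁻¹) * (C (q ^ k) * (X * Pk k)) := by rw [map_mul, mul_assoc]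
    _ = C ((q ^ k)⁻¹) * (Pk k - Pk (k + 1)) := by rw [h]

lemma Grec (m : ℕ) (hm : 1 ≤ m) :
    C (1 - q ^ (m + 1)) * Gpoly (m + 1) =
      C (1 - q ^ (2 * m + 1)) * (X * Gpoly m) -
        C (q ^ (m + 1) * (1 - q ^ m)) * Gpoly (m - 1) := by
  have hX : (X : Polynomial K) * Gpoly m =
      ∑ k ∈ Finset.range (m + 1 + 1), C (w1 m k - w2 m k) * Pk k := by
    rw [Gpoly, Finset.mul_sum]
    have h1 : ∀ k ∈ Finset.range (m + 1),
        X * (C (coefA m k) * Pk k) =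
          C (coefA m k * (q ^ k)⁻¹) * Pk k - C (coefA m k * (q ^ k)⁻¹) * Pk (k + 1) := by
      intro k _
      rw [mul_left_comm, X_mul_Pk, map_mul]
      ring
    rw [Finset.sum_congr rfl h1, Finset.sum_sub_distrib]
    have hA : ∑ k ∈ Finset.range (m + 1 + 1), C (w1 m k) * Pk k =
        ∑ k ∈ Finset.range (m + 1), C (coefA m k * (q ^ k)⁻¹) * Pk k := by
      rw [Finset.sum_range_succ, show w1 m (m + 1) = 0 from if_neg (by omega)]
      simp only [map_zero, zero_mul, add_zero]
      exact Finset.sum_congr rfl fun k hk => by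
        rw [show w1 m k = coefA m k * (q ^ k)⁻¹ from
          if_pos (Nat.lt_succ_iff.mp (Finset.mem_range.mp hk))]
    have hB : ∑ k ∈ Finset.range (m + 1 + 1), C (w2 m k) * Pk k =
        ∑ k ∈ Finset.range (m + 1), C (coefA m k * (q ^ k)⁻¹) * Pk (k + 1) := by
      rw [Finset.sum_range_succ', show w2 m 0 = 0 from if_pos rfl]
      simp only [map_zero, zero_mul, add_zero]
      exact Finset.sum_congr rfl fun k _ => by
        rw [show w2 m (k + 1) = coefA m k * (q ^ k)⁻¹ from by
          rw [w2, if_neg (Nat.succ_ne_zero k)]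
          simp only [Nat.add_sub_cancel]]
    rw [← hA, ← hB, ← Finset.sum_sub_distrib]
    exact Finset.sum_congr rfl fun k _ => by rw [map_sub]; ring
  have hC : ∑ k ∈ Finset.range (m + 1 + 1), C (w3 m k) * Pk k = Gpoly (m - 1) := by
    rw [Finset.sum_range_succ, Finset.sum_range_succ,
      show w3 m (m + 1) = 0 from if_neg (by omega),
      show w3 m m = 0 from if_neg (by omega)]
    simp only [map_zero, zero_mul, add_zero]
    rw [Gpoly, show m - 1 + 1 = m from by omega]
    exact Finset.sum_congr rfl fun k hk => by
      rw [show w3 m k = coefA (m - 1) k from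
        if_pos (by have := Finset.mem_range.mp hk; omega)]
  calc C (1 - q ^ (m + 1)) * Gpoly (m + 1)
      = ∑ k ∈ Finset.range (m + 1 + 1), C ((1 - q ^ (m + 1)) * coefA (m + 1) k) * Pk k := by
        rw [Gpoly, Finset.mul_sum]
        exact Finset.sum_congr rfl fun k _ => by rw [map_mul, mul_assoc]
    _ = ∑ k ∈ Finset.range (m + 1 + 1),
        C ((1 - q ^ (2 * m + 1)) * (w1 m k - w2 m k) -
          q ^ (m + 1) * (1 - q ^ m) * w3 m k) * Pk k := by
        refine Finset.sum_congr rfl fun k hk => ?_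
        have hk' : k ≤ m + 1 := Nat.lt_succ_iff.mp (Finset.mem_range.mp hk)
        rw [w1, w2, w3, key m k hm hk']
    _ = C (1 - q ^ (2 * m + 1)) * (X * Gpoly m) -
        C (q ^ (m + 1) * (1 - q ^ m)) * Gpoly (m - 1) := by
        rw [hX, ← hC, Finset.mul_sum, Finset.mul_sum, ← Finset.sum_sub_distrib]
        exact Finset.sum_congr rfl fun k _ => by rw [map_sub, map_mul, map_mul]; ring

lemma coefA_one_one : coefA 1 1 = -1 := by
  have h := coefA_eq 0 1
  simp only [Nat.add_zero, Nat.zero_add] at h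
  apply mul_right_cancel₀ (b := q ^ (1 * 1) * (Ee 1 1 * Ee 1 1 * Ebar 1))
    (by
      have := denom_ne 0 1
      simpa using this)
  rw [show ((1 : ℕ) + 0) * 1 = 1 * 1 from rfl] at h
  rw [h]
  simp only [Ee, Ebar, Finset.prod_range_one, pow_zero, add_zero, pow_one]
  ring

lemma hsign (m : ℕ) : ((-1 : K) ^ m) * ((-1 : K) ^ m) = 1 := by
  rw [← pow_add, ← two_mul, pow_mul]
  norm_num

lemma compFlip {m : ℕ} {p : Polynomial K}
    (h : p = C ((-1 : K) ^ m) * p.comp (-X)) :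
    p.comp (-X) = C ((-1 : K) ^ m) * p := by
  have h2 := congrArg (fun x => C ((-1 : K) ^ m) * x) h
  simp only [← mul_assoc, ← map_mul, hsign m, map_one, one_mul] at h2
  exact h2.symm

lemma Gpar : ∀ m : ℕ, Gpoly m = C ((-1 : K) ^ m) * (Gpoly m).comp (-X) := by
  have base0 : Gpoly 0 = 1 := by
    simp [Gpoly, Pk, coefA_zero]
  have base1 : Gpoly 1 = X := by
    rw [Gpoly]
    rw [Finset.sum_range_succ, Finset.sum_range_one, coefA_zero, coefA_one_one]
    simp only [Pk, Finset.prod_range_one, Finset.prod_range_zero, pow_zero, map_one,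
      map_neg, one_mul, mul_one]
    ring
  suffices h : ∀ m : ℕ, (Gpoly m = C ((-1 : K) ^ m) * (Gpoly m).comp (-X)) ∧
      (Gpoly (m + 1) = C ((-1 : K) ^ (m + 1)) * (Gpoly (m + 1)).comp (-X)) by
    exact fun m => (h m).1
  intro m
  induction m with
  | zero =>
    constructor
    · rw [base0]; simp
    · rw [base1]; simp
  | succ m ih =>
    refine ⟨ih.2, ?_⟩
    have h2 := Grec (m + 1) (by omega)
    simp only [Nat.add_sub_cancel] at h2
    have hcomp := congrArg (fun p : Polynomial K => p.comp (-X)) h2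
    simp only [sub_comp, mul_comp, C_comp, X_comp] at hcomp
    rw [compFlip ih.2, compFlip ih.1] at hcomp
    have hs1C : (C ((-1 : K) ^ (m + 1 + 1)) : Polynomial K) * C ((-1 : K) ^ (m + 1)) = -1 := by
      rw [← map_mul, ← pow_add, show m + 1 + 1 + (m + 1) = 2 * (m + 1) + 1 from by omega,
        pow_succ, pow_mul]
      norm_num
    have hs0C : (C ((-1 : K) ^ (m + 1 + 1)) : Polynomial K) * C ((-1 : K) ^ m) = 1 := by
      rw [← map_mul, ← pow_add, show m + 1 + 1 + m = 2 * (m + 1) from by omega, pow_mul]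
      norm_num
    have ha : ((C (1 - q ^ (m + 1 + 1))) : Polynomial K) ≠ 0 := by
      rw [Ne, Polynomial.C_eq_zero]
      exact one_sub_qpow_ne (by omega)
    apply mul_left_cancel₀ ha
    rw [h2]
    linear_combination (-(C ((-1 : K) ^ (m + 1 + 1)) : Polynomial K)) * hcomp
      + (C (1 - q ^ (2 * (m + 1) + 1)) * (X * Gpoly (m + 1))) * hs1C
      + (C (q ^ (m + 1 + 1) * (1 - q ^ (m + 1))) * Gpoly m) * hs0C

/-- With `F_n(x) = ∑_{k≤n} (-1)^k qbinom(n,k) qbinom(n+k,k) (x;q)_k q^{k(k+1)/2-nk}/(-q;q)_k`,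
we have `F_n(x) = (-1)^n F_n(-x)`. -/
theorem q_legendre_symmetry (n : ℕ) (hn : 0 < n) (F : Polynomial (RatFunc ℚ))
    (hF : F = ∑ k ∈ Finset.range (n + 1),
        Polynomial.C ((-1 : RatFunc ℚ) ^ k * qBinom n k q * qBinom (n + k) k q *
            q ^ ((k * (k + 1) / 2 : ℕ) - (n : ℤ) * k) / qPoch (-q) q k) *
          ∏ i ∈ Finset.range k, (1 - Polynomial.C (q ^ i) * Polynomial.X)) :
    F = Polynomial.C ((-1 : RatFunc ℚ) ^ n) * F.comp (-Polynomial.X) := by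
  have hFG : F = Gpoly n := by rw [hF]; rfl
  rw [hFG]
  exact Gpar n
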